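/- For all integers m ≥ 2 and i, j ≥ 1, one has 1/d_i(m) + 1/d_j(m) ≥ 1/d_{i+j}(m), and the inequality is strict unless m = 2 and i = j = 1, in which case both sides equal 1. Here d_k(m) = (1/k) Σ_{d ∣ k} μ(d) m^{k/d}. -/

import Mathlib

open ArithmeticFunction Finset

noncomputable def EW (m k : ℕ) : ℚ :=
  ∑ d ∈ k.divisors, ((ArithmeticFunction.moebius d : ℤ) : ℚ) * (m : ℚ) ^ (k / d)

lemma mu1 : (moebius 1 : ℤ) = 1 := by simp
lemma mu2 : (moebius 2 : ℤ) = -1 := moebius_apply_prime (by norm_num)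
lemma mu3 : (moebius 3 : ℤ) = -1 := moebius_apply_prime (by norm_num)
lemma mu4 : (moebius 4 : ℤ) = 0 := moebius_eq_zero_of_not_squarefree (by decide)
lemma mu5 : (moebius 5 : ℤ) = -1 := moebius_apply_prime (by norm_num)
lemma mu6 : (moebius 6 : ℤ) = 1 := by
  rw [show (6:ℕ) = 2*3 from rfl, isMultiplicative_moebius.map_mul_of_coprime (by norm_num),
    mu2, mu3]; ring

lemma EW1 (m : ℕ) : EW m 1 = m := by
  rw [EW, show (1:ℕ).divisors = {1} from by decide]
  simp [mu1]
lemma EW2 (m : ℕ) : EW m 2 = m^2 - m := by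
  rw [EW, show (2:ℕ).divisors = {1,2} from by decide,
    Finset.sum_insert (by decide), Finset.sum_singleton, mu1, mu2]
  norm_num; ring
lemma EW3 (m : ℕ) : EW m 3 = m^3 - m := by
  rw [EW, show (3:ℕ).divisors = {1,3} from by decide,
    Finset.sum_insert (by decide), Finset.sum_singleton, mu1, mu3]
  norm_num; ring
lemma EW4 (m : ℕ) : EW m 4 = m^4 - m^2 := by
  rw [EW, show (4:ℕ).divisors = {1,2,4} from by decide,
    Finset.sum_insert (by decide), Finset.sum_insert (by decide), Finset.sum_singleton,
    mu1, mu2, mu4]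
  norm_num; ring
lemma EW5 (m : ℕ) : EW m 5 = m^5 - m := by
  rw [EW, show (5:ℕ).divisors = {1,5} from by decide,
    Finset.sum_insert (by decide), Finset.sum_singleton, mu1, mu5]
  norm_num; ring
lemma EW6 (m : ℕ) : EW m 6 = m^6 - m^3 - m^2 + m := by
  rw [EW, show (6:ℕ).divisors = {1,2,3,6} from by decide,
    Finset.sum_insert (by decide), Finset.sum_insert (by decide),
    Finset.sum_insert (by decide), Finset.sum_singleton, mu1, mu2, mu3, mu6]
  norm_num; ring

-- geometric bound
lemma geom_bound (q : ℚ) (hq : 2 ≤ q) (h : ℕ) (hh : 1 ≤ h) :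
    ∑ t ∈ Finset.Icc 1 h, q ^ t ≤ 2 * q ^ h - q := by
  induction h, hh using Nat.le_induction with
  | base => simp; nlinarith
  | succ n hn ih =>
    rw [Finset.sum_Icc_succ_top (by omega)]
    have h1 : q ^ n * 2 ≤ q ^ n * q := by
      have : (0:ℚ) < q ^ n := by positivity
      nlinarith
    rw [pow_succ]
    nlinarith

lemma tail_bound (m k : ℕ) (hk : 1 ≤ k) :
    |EW m k - (m:ℚ) ^ k| ≤ ∑ t ∈ Finset.Icc 1 (k/2), (m:ℚ) ^ t := by
  classical
  have h1 : (1:ℕ) ∈ k.divisors := Nat.one_mem_divisors.2 (by omega)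
  have hsplit : EW m k = ((moebius 1 : ℤ) : ℚ) * (m:ℚ) ^ (k/1) +
      ∑ d ∈ k.divisors.erase 1, ((moebius d : ℤ) : ℚ) * (m:ℚ) ^ (k/d) := by
    rw [EW, ← Finset.add_sum_erase _ _ h1]
  rw [hsplit]
  simp only [Nat.div_one, ArithmeticFunction.moebius_apply_one, Int.cast_one, one_mul,
    add_sub_cancel_left]
  calc |∑ d ∈ k.divisors.erase 1, ((moebius d : ℤ) : ℚ) * (m:ℚ) ^ (k/d)|
      ≤ ∑ d ∈ k.divisors.erase 1, |((moebius d : ℤ) : ℚ) * (m:ℚ) ^ (k/d)| :=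
        Finset.abs_sum_le_sum_abs _ _
    _ ≤ ∑ d ∈ k.divisors.erase 1, (m:ℚ) ^ (k/d) := by
        apply Finset.sum_le_sum
        intro d _
        rw [abs_mul, abs_pow, Nat.abs_cast]
        have h2 : |((moebius d : ℤ) : ℚ)| ≤ 1 := by
          have := ArithmeticFunction.abs_moebius_le_one (n := d)
          rw [← Int.cast_abs]
          exact_mod_cast this
        have h3 : (0:ℚ) ≤ (m:ℚ) ^ (k/d) := by positivity
        nlinarith
    _ = ∑ t ∈ (k.divisors.erase 1).image (fun d => k / d), (m:ℚ) ^ t := by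
        rw [Finset.sum_image]
        intro a ha b hb hab
        have hak : a ∣ k := (Nat.mem_divisors.1 (Finset.mem_of_mem_erase ha)).1
        have hbk : b ∣ k := (Nat.mem_divisors.1 (Finset.mem_of_mem_erase hb)).1
        rw [← Nat.div_div_self hak (by omega), ← Nat.div_div_self hbk (by omega), show k / a = k / b from hab]
    _ ≤ ∑ t ∈ Finset.Icc 1 (k/2), (m:ℚ) ^ t := by
        apply Finset.sum_le_sum_of_subset_of_nonneg
        · intro t ht
          simp only [Finset.mem_image] at ht
          obtain ⟨d, hd, rfl⟩ := ht
          have hd1 : d ≠ 1 := Finset.ne_of_mem_erase hd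
          have hdk : d ∣ k := (Nat.mem_divisors.1 (Finset.mem_of_mem_erase hd)).1
          have hd0 : d ≠ 0 := by rintro rfl; simp at hdk; omega
          have hd2 : 2 ≤ d := by omega
          have hle : d ≤ k := Nat.le_of_dvd (by omega) hdk
          simp only [Finset.mem_Icc]
          constructor
          · exact (Nat.one_le_div_iff (by omega)).2 hle
          · exact Nat.div_le_div_left hd2 (by omega)
        · intros; positivity

lemma EW_lower (m k : ℕ) (hm : 2 ≤ m) (hk : 2 ≤ k) :
    (m:ℚ)^k - 2*(m:ℚ)^(k/2) + m ≤ EW m k := by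
  have h1 := tail_bound m k (by omega)
  have h2 := geom_bound (m:ℚ) (by exact_mod_cast hm) (k/2) (by omega)
  have := abs_le.1 h1
  linarith [this.1]

lemma EW_upper (m k : ℕ) (hm : 2 ≤ m) (hk : 2 ≤ k) :
    EW m k ≤ (m:ℚ)^k + 2*(m:ℚ)^(k/2) - m := by
  have h1 := tail_bound m k (by omega)
  have h2 := geom_bound (m:ℚ) (by exact_mod_cast hm) (k/2) (by omega)
  have := abs_le.1 h1
  linarith [this.2]

lemma pow_ge_pow (m : ℕ) (hm : 2 ≤ m) {a b : ℕ} (h : a ≤ b) : (m:ℚ)^a ≤ (m:ℚ)^b :=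
  pow_le_pow_right₀ (by exact_mod_cast Nat.one_le_of_lt hm) h

lemma EW_pos (m k : ℕ) (hm : 2 ≤ m) (hk : 1 ≤ k) : (m:ℚ) ≤ EW m k := by
  rcases Nat.lt_or_ge k 2 with h | h
  · interval_cases k
    rw [EW1]
  · have h1 := EW_lower m k hm h
    have hq : (2:ℚ) ≤ (m:ℚ) := by exact_mod_cast hm
    have key : 2*(m:ℚ)^(k/2) ≤ (m:ℚ)^k := by
      have e : k = k/2 + (k - k/2) := by omega
      have h2 : (m:ℚ)^1 ≤ (m:ℚ)^(k - k/2) := pow_ge_pow m hm (by omega)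
      have h3 : (0:ℚ) < (m:ℚ)^(k/2) := by positivity
      calc 2*(m:ℚ)^(k/2) ≤ (m:ℚ)^(k/2) * (m:ℚ)^(k - k/2) := by
            rw [pow_one] at h2; nlinarith
        _ = (m:ℚ)^k := by rw [← pow_add, ← e]
    linarith

lemma EW_step (m k : ℕ) (hm : 2 ≤ m) (hk2 : 2 ≤ k ∨ (1 ≤ k ∧ 3 ≤ m)) :
    ((k:ℚ)+1) * EW m k ≤ (k:ℚ) * EW m (k+1) := by
  have hq : (2:ℚ) ≤ (m:ℚ) := by exact_mod_cast hm
  have hk1 : 1 ≤ k := by omega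
  rcases Nat.lt_or_ge k 6 with h | h
  · -- small cases exactly
    have p1 : (m:ℚ)*2 ≤ (m:ℚ)^2 := by nlinarith
    have p2 : (m:ℚ)^2*2 ≤ (m:ℚ)^3 := by nlinarith
    have p3 : (m:ℚ)^3*2 ≤ (m:ℚ)^4 := by nlinarith [p2, sq_nonneg ((m:ℚ))]
    have p4 : (m:ℚ)^4*2 ≤ (m:ℚ)^5 := by nlinarith [p3]
    have p5 : (m:ℚ)^5*2 ≤ (m:ℚ)^6 := by nlinarith [p4]
    interval_cases k
    · have hq3 : (3:ℚ) ≤ (m:ℚ) := by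
        rcases hk2 with h | h; · omega
        exact_mod_cast h.2
      rw [EW1, EW2]; push_cast; nlinarith
    · rw [EW2, EW3]; push_cast; linarith
    · rw [EW3, EW4]; push_cast; linarith
    · rw [EW4, EW5]; push_cast; linarith
    · rw [EW5, EW6]; push_cast; linarith
  · -- large k via bounds
    have hl := EW_lower m (k+1) hm (by omega)
    have hu := EW_upper m k hm (by omega)
    have hK : (6:ℚ) ≤ (k:ℚ) := by exact_mod_cast h
    set q := (m:ℚ)
    have hq0 : (0:ℚ) < q := by linarith
    -- exponent facts
    have e1 : k + 1 = (k+1)/2 + (k + 1 - (k+1)/2) := by omega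
    have e2 : 3 ≤ k + 1 - (k+1)/2 := by omega
    have e3 : k/2 ≤ (k+1)/2 := by omega
    have hsplit : q^(k+1) = q^((k+1)/2) * q^(k+1-(k+1)/2) := by
      rw [← pow_add, ← e1]
    have h8 : (8:ℚ) ≤ q^(k+1-(k+1)/2) := by
      calc (8:ℚ) = 2^3 := by norm_num
        _ ≤ q^3 := by gcongr
        _ ≤ q^(k+1-(k+1)/2) := pow_ge_pow m hm e2
    have hh : q^(k/2) ≤ q^((k+1)/2) := pow_ge_pow m hm e3
    have hkk : q^k ≤ q^(k+1-(k+1)/2-1+ (k+1)/2) := pow_ge_pow m hm (by omega)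
    have hpos1 : (0:ℚ) < q^((k+1)/2) := by positivity
    have hpos2 : (0:ℚ) < q^k := by positivity
    -- key: (K-1) q^k ≥ (4K+2) q^((k+1)/2)
    have key : (4*(k:ℚ)+2) * q^((k+1)/2) ≤ ((k:ℚ)-1) * q^k := by
      have e4 : k = (k+1)/2 + (k - (k+1)/2) := by omega
      have hsplit2 : q^k = q^((k+1)/2) * q^(k-(k+1)/2) := by rw [← pow_add, ← e4]
      have h8' : (8:ℚ) ≤ q^(k-(k+1)/2) := by
        calc (8:ℚ) = 2^3 := by norm_num
          _ ≤ q^3 := by gcongr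
          _ ≤ q^(k-(k+1)/2) := pow_ge_pow m hm (by omega)
      have t1 : (4*(k:ℚ)+2) ≤ ((k:ℚ)-1) * q^(k-(k+1)/2) := by
        nlinarith [mul_le_mul_of_nonneg_left h8' (show (0:ℚ) ≤ (k:ℚ)-1 by linarith)]
      have t2 := mul_le_mul_of_nonneg_right t1 hpos1.le
      rw [hsplit2]; nlinarith [t2]
    have hqk1 : 2 * q^k ≤ q^(k+1) := by
      rw [pow_succ]; nlinarith [hpos2]
    have A := mul_le_mul_of_nonneg_left hu (show (0:ℚ) ≤ (k:ℚ)+1 by linarith)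
    have B := mul_le_mul_of_nonneg_left hl (show (0:ℚ) ≤ (k:ℚ) by linarith)
    have C := mul_le_mul_of_nonneg_left hqk1 (show (0:ℚ) ≤ (k:ℚ) by linarith)
    have D := mul_le_mul_of_nonneg_left hh (show (0:ℚ) ≤ 2*((k:ℚ)+1) by linarith)
    have E : (0:ℚ) ≤ (k:ℚ) * q := by positivity
    linarith [A, B, C, D, key, E]

/-- `dWitt m k` is `(1/k) * ∑_{d ∣ k} μ(d) m^(k/d)`, the dimension of the space of
Lie polynomials of degree `k` on `m` generators (Witt's formula), as a rational number. -/
noncomputable def dWitt (m k : ℕ) : ℚ :=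
  (1 / (k : ℚ)) * ∑ d ∈ k.divisors, ((ArithmeticFunction.moebius d : ℤ) : ℚ) * (m : ℚ) ^ (k / d)

lemma dWitt_eq (m k : ℕ) : dWitt m k = (1 / (k:ℚ)) * EW m k := rfl

lemma dWitt_pos (m k : ℕ) (hm : 2 ≤ m) (hk : 1 ≤ k) : 0 < dWitt m k := by
  rw [dWitt_eq]
  have h1 := EW_pos m k hm hk
  have h2 : (0:ℚ) < (k:ℚ) := by exact_mod_cast hk
  have h3 : (0:ℚ) < (m:ℚ) := by exact_mod_cast (show 0 < m by omega)
  have h4 : (0:ℚ) < 1/(k:ℚ) := by positivity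
  exact mul_pos h4 (lt_of_lt_of_le h3 h1)

lemma dWitt_mono (m : ℕ) (hm : 2 ≤ m) {a b : ℕ} (hab : a ≤ b)
    (hx : 2 ≤ a ∨ (1 ≤ a ∧ 3 ≤ m)) : dWitt m a ≤ dWitt m b := by
  induction b, hab using Nat.le_induction with
  | base => exact le_refl _
  | succ n hn ih =>
    refine le_trans ih ?_
    have ha1 : 1 ≤ a := by omega
    have hn1 : 1 ≤ n := by omega
    have hstep := EW_step m n hm (by omega)
    rw [dWitt_eq, dWitt_eq]
    rw [div_mul_eq_mul_div, div_mul_eq_mul_div, one_mul, one_mul,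
      div_le_div_iff₀ (by exact_mod_cast hn1) (by positivity)]
    push_cast
    linarith [hstep]

lemma main_strict (m i j : ℕ) (hm : 2 ≤ m) (hi : 1 ≤ i) (hij : i ≤ j)
    (hx : 2 ≤ j ∨ 3 ≤ m) :
    1 / dWitt m (i + j) < 1 / dWitt m i + 1 / dWitt m j := by
  have hj : 1 ≤ j := le_trans hi hij
  have hji : dWitt m j ≤ dWitt m (i+j) :=
    dWitt_mono m hm (by omega) (by omega)
  have hpi := dWitt_pos m i hm hi
  have hpj := dWitt_pos m j hm hj
  have hpij := dWitt_pos m (i+j) hm (by omega)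
  have h1 : 1 / dWitt m (i+j) ≤ 1 / dWitt m j :=
    one_div_le_one_div_of_le hpj hji
  have h2 : 0 < 1 / dWitt m i := by positivity
  linarith

theorem stmt_8 (m i j : ℕ) (hm : 2 ≤ m) (hi : 1 ≤ i) (hj : 1 ≤ j) :
    1 / dWitt m (i + j) ≤ 1 / dWitt m i + 1 / dWitt m j ∧
    (¬(m = 2 ∧ i = 1 ∧ j = 1) → 1 / dWitt m (i + j) < 1 / dWitt m i + 1 / dWitt m j) ∧
    ((m = 2 ∧ i = 1 ∧ j = 1) →
      1 / dWitt m i + 1 / dWitt m j = 1 ∧ 1 / dWitt m (i + j) = 1) := by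
  by_cases hc : m = 2 ∧ i = 1 ∧ j = 1
  · obtain ⟨rfl, rfl, rfl⟩ := hc
    have e1 : dWitt 2 1 = 2 := by
      rw [dWitt_eq, EW1]; norm_num
    have e2 : dWitt 2 2 = 1 := by
      rw [dWitt_eq, EW2]; norm_num
    rw [show (1:ℕ)+1 = 2 from rfl, e1, e2]
    norm_num
  · have hstrict : 1 / dWitt m (i + j) < 1 / dWitt m i + 1 / dWitt m j := by
      rcases le_total i j with h | h
      · exact main_strict m i j hm hi h (by omega)
      · have := main_strict m j i hm hj h (by omega)
        rw [Nat.add_comm j i] at this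
        linarith
    exact ⟨le_of_lt hstrict, fun _ => hstrict, fun h => absurd h hc⟩
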